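/- The assignments U ↦ Q(U) (essential image) and X ↦ Q⁻¹(X) (preimage) are mutually inverse, inclusion-preserving bijections between the collection of extension-closed additive full subcategories of T containing D and the collection of extension-closed additive full subcategories of T/D. -/

import Mathlib

/-!
STATEMENT 6: Let T be a triangulated category, D a thick subcategory and Q : T → T/D the
Verdier quotient functor (formalized as a localization functor with respect to the class
D.trW of morphisms whose cone lies in D). The assignments U ↦ Q(U) (essential image) and
X ↦ Q⁻¹(X) (preimage) are mutually inverse, inclusion preserving bijections between the
extension-closed additive full subcategories of T containing D and the extension-closed
additive full subcategories of T/D.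
-/

open CategoryTheory Limits Pretriangulated

universe v₁ v₂ u₁ u₂

/-- A class of objects is an additive full subcategory if it contains the zero objects and
is closed under isomorphisms, finite direct sums and direct summands. -/
def IsAdditiveSubcategory {T : Type u₁} [Category.{v₁} T] [Preadditive T] [HasZeroObject T]
    [HasBinaryBiproducts T] (U : Set T) : Prop :=
  (∀ X : T, IsZero X → X ∈ U) ∧
  (∀ X Y : T, X ∈ U → Nonempty (X ≅ Y) → Y ∈ U) ∧
  (∀ X Y : T, X ∈ U → Y ∈ U → (X ⊞ Y) ∈ U) ∧
  (∀ X Y : T, (X ⊞ Y) ∈ U → X ∈ U ∧ Y ∈ U)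

/-- A class of objects is extension-closed if for every distinguished triangle
`x ⟶ e ⟶ y ⟶ x⟦1⟧` with `x` and `y` in the class, also `e` is in the class. -/
def IsExtensionClosed (T : Type u₁) [Category.{v₁} T] [Preadditive T] [HasZeroObject T]
    [HasShift T ℤ] [∀ n : ℤ, (shiftFunctor T n).Additive] [Pretriangulated T]
    (U : Set T) : Prop :=
  ∀ Tr : Triangle T, Tr ∈ (distTriang T) → Tr.obj₁ ∈ U → Tr.obj₃ ∈ U → Tr.obj₂ ∈ U

/-- The essential image of a class of objects under a functor. -/
def essImageSet {T : Type u₁} [Category.{v₁} T] {T' : Type u₂} [Category.{v₂} T']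
    (Q : T ⥤ T') (U : Set T) : Set T' :=
  {z : T' | ∃ u ∈ U, Nonempty (z ≅ Q.obj u)}

/-- The preimage (up to isomorphism) of a class of objects under a functor. -/
def preimageSet {T : Type u₁} [Category.{v₁} T] {T' : Type u₂} [Category.{v₂} T']
    (Q : T ⥤ T') (X : Set T') : Set T :=
  {t : T | ∃ x ∈ X, Nonempty (Q.obj t ≅ x)}


open CategoryTheory Limits Pretriangulated ZeroObject

namespace VerdierBijAux

section MC

variable {T : Type u₁} [Category.{v₁} T]

/-- The multiplicative closure of a class of morphisms. -/
inductive mc (W : MorphismProperty T) : ∀ ⦃X Y : T⦄, (X ⟶ Y) → Prop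
  | of {X Y : T} (f : X ⟶ Y) (hf : W f) : mc W f
  | id (X : T) : mc W (𝟙 X)
  | comp {X Y Z : T} (f : X ⟶ Y) (g : Y ⟶ Z) (hf : mc W f) (hg : mc W g) : mc W (f ≫ g)

/-- The multiplicative closure as a `MorphismProperty`. -/
def mcl (W : MorphismProperty T) : MorphismProperty T := fun _ _ f => mc W f

lemma mcl_of {W : MorphismProperty T} {X Y : T} {f : X ⟶ Y} (hf : W f) : mcl W f := mc.of f hf

instance (W : MorphismProperty T) : (mcl W).IsMultiplicative where
  id_mem X := mc.id X
  comp_mem f g hf hg := mc.comp f g hf hg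

lemma mcl_isInvertedBy {W : MorphismProperty T} {E : Type*} [Category E] {F : T ⥤ E}
    (hF : W.IsInvertedBy F) : (mcl W).IsInvertedBy F := by
  intro X Y f hf
  induction hf with
  | of f hf => exact hF _ hf
  | id X => rw [F.map_id]; infer_instance
  | comp f g hf hg hf' hg' => rw [F.map_comp]; exact IsIso.comp_isIso

/-- strict universal property of `W.Q` with respect to the multiplicative closure. -/
noncomputable def mclStrict (W : MorphismProperty T) (E : Type*) [Category E] :
    Localization.StrictUniversalPropertyFixedTarget W.Q (mcl W) E where
  inverts := mcl_isInvertedBy W.Q_inverts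
  lift F hF := Localization.Construction.lift F (fun _ _ f hf => hF _ (mc.of f hf))
  fac F hF := Localization.Construction.fac _ _
  uniq := Localization.Construction.uniq

lemma isLocalization_mcl_Q (W : MorphismProperty T) : W.Q.IsLocalization (mcl W) :=
  Functor.IsLocalization.mk' _ _ (mclStrict W _) (mclStrict W _)

lemma isLocalization_mcl {T' : Type u₂} [Category.{v₂} T'] (Q : T ⥤ T')
    (W : MorphismProperty T) [Q.IsLocalization W] : Q.IsLocalization (mcl W) := by
  haveI := isLocalization_mcl_Q W
  exact Functor.IsLocalization.of_equivalence_target W.Q (mcl W) Q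
    (Localization.uniq W.Q Q W) (Localization.compUniqFunctor W.Q Q W)

end MC

section Calc

variable {T : Type u₁} [Category.{v₁} T] [Preadditive T] [HasZeroObject T]
  [HasBinaryBiproducts T] [HasShift T ℤ] [∀ n : ℤ, (shiftFunctor T n).Additive]
  [Pretriangulated T] (D : ObjectProperty T) [D.IsTriangulated]

lemma mcl_shift {X Y : T} {f : X ⟶ Y} (hf : mcl D.trW f) (n : ℤ) : mcl D.trW (f⟦n⟧') := by
  induction hf with
  | of f hf => exact mcl_of (hf.shift n)
  | id X => simp only [CategoryTheory.Functor.map_id]; exact mc.id _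
  | comp f g hf hg hf' hg' => rw [(shiftFunctor T n).map_comp]; exact mc.comp _ _ hf' hg'

lemma ore_left {Z X : T} {s : Z ⟶ X} (hs : mcl D.trW s) :
    ∀ {Y : T} (f : Z ⟶ Y), ∃ (P : T) (s' : Y ⟶ P) (f' : X ⟶ P),
      mcl D.trW s' ∧ f ≫ s' = s ≫ f' := by
  induction hs with
  | of s hs =>
    intro Y f
    obtain ⟨C₀, g, h, H, memC⟩ := hs
    obtain ⟨P, s', g', mem'⟩ := distinguished_cocone_triangle₂ (h ≫ f⟦(1 : ℤ)⟧')
    obtain ⟨b, hb₁, _⟩ := complete_distinguished_triangle_morphism₂ _ _ H mem' f (𝟙 C₀)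
      (by exact (Category.id_comp _).symm)
    exact ⟨P, s', b, mcl_of (ObjectProperty.trW.mk D mem' memC), hb₁.symm⟩
  | id X => exact fun f => ⟨_, 𝟙 _, f, mc.id _, by simp⟩
  | comp s₁ s₂ hs₁ hs₂ ih₁ ih₂ =>
    intro Y f
    obtain ⟨P₁, s₁', f₁', h₁, fac₁⟩ := ih₁ f
    obtain ⟨P₂, s₂', f₂', h₂, fac₂⟩ := ih₂ f₁'
    exact ⟨P₂, s₁' ≫ s₂', f₂', mc.comp _ _ h₁ h₂, by
      rw [← Category.assoc, fac₁, Category.assoc, fac₂, Category.assoc]⟩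

lemma ext_left {Z X : T} {s : Z ⟶ X} (hs : mcl D.trW s) :
    ∀ {Y : T} (f₁ f₂ : X ⟶ Y), s ≫ f₁ = s ≫ f₂ →
      ∃ (Y' : T) (t : Y ⟶ Y'), mcl D.trW t ∧ f₁ ≫ t = f₂ ≫ t := by
  induction hs with
  | of s hs =>
    intro Y f₁ f₂ hf
    obtain ⟨C₀, g, h, H, memC⟩ := hs
    have hf₂ : s ≫ (f₁ - f₂) = 0 := by rw [Preadditive.comp_sub, hf, sub_self]
    obtain ⟨q, hq⟩ : ∃ q : C₀ ⟶ Y, f₁ - f₂ = g ≫ q := Triangle.yoneda_exact₂ _ H _ hf₂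
    obtain ⟨Y', r, t', mem'⟩ := distinguished_cocone_triangle q
    refine ⟨Y', r, mcl_of (ObjectProperty.trW.mk' D mem' memC), ?_⟩
    have z := comp_distTriang_mor_zero₁₂ _ mem'
    replace z : q ≫ r = 0 := z
    rw [← sub_eq_zero, ← Preadditive.sub_comp, hq, Category.assoc, z, comp_zero]
  | id X => exact fun f₁ f₂ hf => ⟨_, 𝟙 _, mc.id _, by simpa using hf⟩
  | comp s₁ s₂ hs₁ hs₂ ih₁ ih₂ =>
    intro Y f₁ f₂ hf
    obtain ⟨Y₁, t₁, ht₁, fac₁⟩ := ih₁ (s₂ ≫ f₁) (s₂ ≫ f₂) (by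
      simpa only [← Category.assoc] using hf)
    obtain ⟨Y₂, t₂, ht₂, fac₂⟩ := ih₂ (f₁ ≫ t₁) (f₂ ≫ t₁) (by
      simpa only [← Category.assoc] using fac₁)
    exact ⟨Y₂, t₁ ≫ t₂, mc.comp _ _ ht₁ ht₂, by
      simpa only [← Category.assoc] using fac₂⟩

lemma hasLeftCalc : (mcl D.trW).HasLeftCalculusOfFractions where
  exists_leftFraction X Y φ := by
    obtain ⟨P, s', f', hs', fac⟩ := ore_left D φ.hs φ.f
    exact ⟨MorphismProperty.LeftFraction.mk f' s' hs', fac⟩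
  ext X' X Y f₁ f₂ s hs hf := by
    obtain ⟨Y', t, ht, fac⟩ := ext_left D hs f₁ f₂ hf
    exact ⟨Y', t, ht, fac⟩

lemma ore_right {Y Y' : T} {s : Y ⟶ Y'} (hs : mcl D.trW s) :
    ∀ {X : T} (f : X ⟶ Y'), ∃ (P : T) (s' : P ⟶ X) (f' : P ⟶ Y),
      mcl D.trW s' ∧ s' ≫ f = f' ≫ s := by
  induction hs with
  | of s hs =>
    intro X f
    obtain ⟨C₀, g, h, H, memC⟩ := hs
    obtain ⟨P, s', h', mem'⟩ := distinguished_cocone_triangle₁ (f ≫ g)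
    obtain ⟨a, ha₁, _⟩ := complete_distinguished_triangle_morphism₁ _ _ mem' H f (𝟙 C₀)
      (by exact Category.comp_id _)
    exact ⟨P, s', a, mcl_of (ObjectProperty.trW.mk D mem' memC), ha₁⟩
  | id X => exact fun f => ⟨_, 𝟙 _, f, mc.id _, by simp⟩
  | comp s₁ s₂ hs₁ hs₂ ih₁ ih₂ =>
    intro X f
    obtain ⟨P₂, s₂', f₂', h₂, fac₂⟩ := ih₂ f
    obtain ⟨P₁, s₁', f₁', h₁, fac₁⟩ := ih₁ f₂'
    exact ⟨P₁, s₁' ≫ s₂', f₁', mc.comp _ _ h₁ h₂, by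
      rw [Category.assoc, fac₂, ← Category.assoc, fac₁, Category.assoc]⟩

lemma ext_right {Z Z' : T} {s : Z ⟶ Z'} (hs : mcl D.trW s) :
    ∀ {Y : T} (f₁ f₂ : Y ⟶ Z), f₁ ≫ s = f₂ ≫ s →
      ∃ (Y' : T) (t : Y' ⟶ Y), mcl D.trW t ∧ t ≫ f₁ = t ≫ f₂ := by
  induction hs with
  | of s hs =>
    intro Y f₁ f₂ hf
    obtain ⟨X, ι, h, H, memX⟩ := (D.trW_iff' s).1 hs
    have hf₂ : (f₁ - f₂) ≫ s = 0 := by rw [Preadditive.sub_comp, hf, sub_self]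
    obtain ⟨q, hq⟩ : ∃ q : Y ⟶ X, f₁ - f₂ = q ≫ ι := Triangle.coyoneda_exact₂ _ H _ hf₂
    obtain ⟨Y'', r, t', mem'⟩ := distinguished_cocone_triangle₁ q
    have z := comp_distTriang_mor_zero₁₂ _ mem'
    replace z : r ≫ q = 0 := z
    refine ⟨Y'', r, mcl_of (ObjectProperty.trW.mk D mem' memX), ?_⟩
    rw [← sub_eq_zero, ← Preadditive.comp_sub, hq, ← Category.assoc, z, zero_comp]
  | id X => exact fun f₁ f₂ hf => ⟨_, 𝟙 _, mc.id _, by simpa using hf⟩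
  | comp s₁ s₂ hs₁ hs₂ ih₁ ih₂ =>
    intro Y f₁ f₂ hf
    obtain ⟨Y₂, t₂, ht₂, fac₂⟩ := ih₂ (f₁ ≫ s₁) (f₂ ≫ s₁) (by
      simpa only [Category.assoc] using hf)
    obtain ⟨Y₁, t₁, ht₁, fac₁⟩ := ih₁ (t₂ ≫ f₁) (t₂ ≫ f₂) (by
      simpa only [Category.assoc] using fac₂)
    exact ⟨Y₁, t₁ ≫ t₂, mc.comp _ _ ht₁ ht₂, by
      simpa only [Category.assoc] using fac₁⟩

lemma hasRightCalc : (mcl D.trW).HasRightCalculusOfFractions where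
  exists_rightFraction X Y φ := by
    obtain ⟨P, s', f', hs', fac⟩ := ore_right D φ.hs φ.f
    exact ⟨MorphismProperty.RightFraction.mk s' hs' f', fac⟩
  ext Y Z Z' f₁ f₂ s hs hf := by
    obtain ⟨Y', t, ht, fac⟩ := ext_right D hs f₁ f₂ hf
    exact ⟨Y', t, ht, fac⟩

end Calc

section Kern

variable {T : Type u₁} [Category.{v₁} T] [Preadditive T] [HasZeroObject T]
  [HasBinaryBiproducts T] [HasShift T ℤ] [∀ n : ℤ, (shiftFunctor T n).Additive]
  [Pretriangulated T] (D : ObjectProperty T) [D.IsTriangulated] [D.IsClosedUnderIsomorphisms]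

lemma D_biprod {A B : T} (hA : D A) (hB : D B) : D (A ⊞ B) :=
  D.ext_of_isTriangulatedClosed₂ _ (binaryBiproductTriangle_distinguished A B) hA hB

lemma D_retract (hD : ∀ X Y : T, D (X ⊞ Y) → D X ∧ D Y)
    {X M : T} (hM : D M) (i : X ⟶ M) (r : M ⟶ X) (hir : i ≫ r = 𝟙 X) : D X := by
  obtain ⟨c, p, h, hT⟩ := distinguished_cocone_triangle i
  have z := comp_distTriang_mor_zero₃₁ _ hT
  replace z : h ≫ i⟦(1 : ℤ)⟧' = 0 := z
  have h0 : h = 0 := by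
    have : h ≫ (i ≫ r)⟦(1 : ℤ)⟧' = 0 := by
      rw [Functor.map_comp, ← Category.assoc, z, zero_comp]
    simpa [hir] using this
  obtain ⟨e, he₁, he₂⟩ := exists_iso_binaryBiproduct_of_distTriang _ hT h0
  exact (hD X c (D.prop_of_iso e hM)).1

/-- Factoring through an object of `D`. -/
def FacD {a b : T} (f : a ⟶ b) : Prop :=
  ∃ (E : T) (α : a ⟶ E) (β : E ⟶ b), D E ∧ f = α ≫ β

lemma facD_of_comp {x₁ x₂ : T} {g : x₁ ⟶ x₂} (hg : D.trW g) {z : T} (f : z ⟶ x₁)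
    (hfg : FacD D (f ≫ g)) : FacD D f := by
  obtain ⟨e, p, h, hT, he⟩ := hg
  obtain ⟨E, α, β, hE, hfac⟩ := hfg
  have z12 := comp_distTriang_mor_zero₁₂ _ hT
  replace z12 : g ≫ p = 0 := z12
  have hαo : α ≫ (β ≫ p) = 0 := by
    rw [← Category.assoc, ← hfac, Category.assoc, z12, comp_zero]
  obtain ⟨E₂, μ, ηh, hT2⟩ := distinguished_cocone_triangle₁ (β ≫ p)
  have hE₂ : D E₂ := D.ext_of_isTriangulatedClosed₁ _ hT2 hE he
  obtain ⟨α', hα'⟩ : ∃ α' : z ⟶ E₂, α = α' ≫ μ := Triangle.coyoneda_exact₂ _ hT2 α hαo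
  have z2 := comp_distTriang_mor_zero₁₂ _ hT2
  replace z2 : μ ≫ β ≫ p = 0 := z2
  have hBp : (μ ≫ β) ≫ p = 0 := by rw [Category.assoc, z2]
  obtain ⟨ξ, hξ⟩ : ∃ ξ : E₂ ⟶ x₁, μ ≫ β = ξ ≫ g := Triangle.coyoneda_exact₂ _ hT (μ ≫ β) hBp
  have hdiff : (α' ≫ ξ - f) ≫ (Triangle.mk g p h).invRotate.mor₂ = 0 := by
    show (α' ≫ ξ - f) ≫ g = 0
    rw [Preadditive.sub_comp, Category.assoc, ← hξ, ← Category.assoc, ← hα', ← hfac, sub_self]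
  obtain ⟨δ, hδ⟩ : ∃ δ : z ⟶ (e⟦(-1 : ℤ)⟧),
      α' ≫ ξ - f = δ ≫ (Triangle.mk g p h).invRotate.mor₁ :=
    Triangle.coyoneda_exact₂ _ (inv_rot_of_distTriang _ hT) _ hdiff
  obtain ⟨ι, hδ⟩ : ∃ ι : e⟦(-1 : ℤ)⟧ ⟶ x₁, α' ≫ ξ - f = δ ≫ ι := ⟨_, hδ⟩
  refine ⟨E₂ ⊞ (e⟦(-1 : ℤ)⟧), biprod.lift α' (-δ),
    biprod.desc ξ ι,
    D_biprod D hE₂ (D.le_shift (-1) e he), ?_⟩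
  rw [biprod.lift_desc, Preadditive.neg_comp, ← sub_eq_add_neg, ← hδ]
  abel

lemma facD_mcl {z y : T} {g : z ⟶ y} (hg : mcl D.trW g) :
    ∀ {w : T} (f : w ⟶ z), FacD D (f ≫ g) → FacD D f := by
  induction hg with
  | of g hg => exact fun f hf => facD_of_comp D hg f hf
  | id X => intro w f hf; rwa [Category.comp_id] at hf
  | comp g₁ g₂ h₁ h₂ ih₁ ih₂ =>
    intro w f hf
    exact ih₁ f (ih₂ (f ≫ g₁) (by rwa [← Category.assoc] at hf))

lemma D_of_facD_mcl (hD : ∀ X Y : T, D (X ⊞ Y) → D X ∧ D Y)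
    {z y : T} {g : z ⟶ y} (hg : mcl D.trW g) (h : FacD D g) : D z := by
  have h1 : FacD D (𝟙 z) := facD_mcl D hg (𝟙 z) (by rwa [Category.id_comp])
  obtain ⟨E, i, r, hE, hir⟩ := h1
  exact D_retract D hD hE i r hir.symm

end Kern

section Main

variable {T : Type u₁} [Category.{v₁} T] [Preadditive T] [HasZeroObject T]
  [HasBinaryBiproducts T] [HasShift T ℤ] [∀ n : ℤ, (shiftFunctor T n).Additive]
  [Pretriangulated T]
  {T' : Type u₂} [Category.{v₂} T'] [Preadditive T'] [HasZeroObject T']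
  [HasBinaryBiproducts T'] [HasShift T' ℤ] [∀ n : ℤ, (shiftFunctor T' n).Additive]
  [Pretriangulated T']
  (D : ObjectProperty T) [D.IsTriangulated] [D.IsClosedUnderIsomorphisms]
  (Q : T ⥤ T') [Q.CommShift ℤ] [Q.IsTriangulated] [Q.IsLocalization D.trW]

lemma isZero_Q_of_D {d : T} (hd : D d) : IsZero (Q.obj d) := by
  have hw : D.trW (0 : d ⟶ 0) :=
    ObjectProperty.trW.mk D (contractible_distinguished₂ d) (D.le_shift 1 d hd)
  haveI : IsIso (Q.map (0 : d ⟶ 0)) := Localization.inverts Q D.trW _ hw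
  exact (Q.map_isZero (isZero_zero T)).of_iso (asIso (Q.map (0 : d ⟶ 0)))

lemma D_of_isZero (hD : ∀ X Y : T, D (X ⊞ Y) → D X ∧ D Y)
    {z : T} (hz : IsZero (Q.obj z)) : D z := by
  haveI := isLocalization_mcl Q D.trW
  haveI := hasLeftCalc D
  have heq : Q.map (𝟙 z) = Q.map (0 : z ⟶ z) := hz.eq_of_src _ _
  obtain ⟨y, s, hs, fac⟩ := (MorphismProperty.map_eq_iff_postcomp Q (mcl D.trW) (𝟙 z) 0).1 heq
  have hs0 : s = 0 := by simpa using fac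
  subst hs0
  exact D_of_facD_mcl D hD hs ⟨0, 0, 0, D.prop_zero, by simp⟩

lemma W_of_Qiso (hD : ∀ X Y : T, D (X ⊞ Y) → D X ∧ D Y)
    {a b : T} {f : a ⟶ b} (hf : IsIso (Q.map f)) : D.trW f := by
  obtain ⟨c, p, h', hT⟩ := distinguished_cocone_triangle f
  have hker : IsZero (Q.obj c) :=
    Triangle.isZero₃_of_isIso₁ _ (Q.map_distinguished _ hT) hf
  exact ⟨c, p, h', hT, D_of_isZero D Q hD hker⟩

variable {U : Set T}

lemma U_W_iff (hUe : IsExtensionClosed T U) (hUD : ∀ d : T, D d → d ∈ U)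
    {a b : T} {s : a ⟶ b} (hs : D.trW s) : a ∈ U ↔ b ∈ U := by
  obtain ⟨e, g, h, hT, he⟩ := hs
  constructor
  · intro ha; exact hUe _ hT ha (hUD e he)
  · intro hb
    exact hUe _ (inv_rot_of_distTriang _ hT) (hUD _ (D.le_shift (-1) e he)) hb

lemma U_mcl_iff (hUe : IsExtensionClosed T U) (hUD : ∀ d : T, D d → d ∈ U)
    {a b : T} {s : a ⟶ b} (hs : mcl D.trW s) : a ∈ U ↔ b ∈ U := by
  induction hs with
  | of s hs => exact U_W_iff D hUe hUD hs
  | id X => exact Iff.rfl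
  | comp f g hf hg ihf ihg => exact ihf.trans ihg

lemma mem_of_Qiso (hD : ∀ X Y : T, D (X ⊞ Y) → D X ∧ D Y)
    (hUe : IsExtensionClosed T U) (hUD : ∀ d : T, D d → d ∈ U)
    {c u : T} (e : Q.obj c ≅ Q.obj u) (hu : u ∈ U) : c ∈ U := by
  haveI := isLocalization_mcl Q D.trW
  haveI := hasLeftCalc D
  obtain ⟨φ, hφ⟩ := Localization.exists_leftFraction Q (mcl D.trW) e.hom
  haveI : IsIso (Q.map φ.s) := mcl_isInvertedBy (Localization.inverts Q D.trW) _ φ.hs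
  have hz : φ.Y' ∈ U := (U_mcl_iff D hUe hUD φ.hs).1 hu
  have hQf : IsIso (Q.map φ.f) := by
    have : e.hom ≫ Q.map φ.s = Q.map φ.f := by
      rw [hφ]; exact φ.map_comp_map_s Q _
    rw [← this]; infer_instance
  exact (U_W_iff D hUe hUD (W_of_Qiso D Q hD hQf)).2 hz

/-- image of a biproduct under an additive functor -/
noncomputable def QmapBiprod (a b : T) : Q.obj (a ⊞ b) ≅ Q.obj a ⊞ Q.obj b where
  hom := biprod.lift (Q.map biprod.fst) (Q.map biprod.snd)
  inv := biprod.desc (Q.map biprod.inl) (Q.map biprod.inr)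
  hom_inv_id := by
    rw [biprod.lift_desc, ← Q.map_comp, ← Q.map_comp, ← Q.map_add, biprod.total, Q.map_id]
  inv_hom_id := by
    ext
    all_goals simp [← Q.map_comp]

lemma essImage_additive (hD : ∀ X Y : T, D (X ⊞ Y) → D X ∧ D Y)
    (hU : IsAdditiveSubcategory U) (hUe : IsExtensionClosed T U)
    (hUD : ∀ d : T, D d → d ∈ U) :
    IsAdditiveSubcategory (essImageSet Q U) := by
  refine ⟨?_, ?_, ?_, ?_⟩
  · intro X hX
    exact ⟨0, hU.1 0 (isZero_zero T), ⟨hX.iso (Q.map_isZero (isZero_zero T))⟩⟩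
  · rintro X Y ⟨u, hu, ⟨e⟩⟩ ⟨e'⟩
    exact ⟨u, hu, ⟨e'.symm ≪≫ e⟩⟩
  · rintro X Y ⟨u, hu, ⟨e⟩⟩ ⟨v, hv, ⟨e'⟩⟩
    exact ⟨u ⊞ v, hU.2.2.1 u v hu hv, ⟨biprod.mapIso e e' ≪≫ (QmapBiprod Q u v).symm⟩⟩
  · rintro X Y ⟨u, hu, ⟨e⟩⟩
    haveI : Q.EssSurj := Localization.essSurj Q D.trW
    set a := Q.objPreimage X with ha
    set b := Q.objPreimage Y with hb
    have ea : Q.obj a ≅ X := Q.objObjPreimageIso X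
    have eb : Q.obj b ≅ Y := Q.objObjPreimageIso Y
    have eab : Q.obj (a ⊞ b) ≅ Q.obj u :=
      QmapBiprod Q a b ≪≫ biprod.mapIso ea eb ≪≫ e
    have hab : (a ⊞ b) ∈ U := mem_of_Qiso D Q hD hUe hUD eab hu
    obtain ⟨haU, hbU⟩ := hU.2.2.2 a b hab
    exact ⟨⟨a, haU, ⟨ea.symm⟩⟩, ⟨b, hbU, ⟨eb.symm⟩⟩⟩

lemma essImage_ext (hUe : IsExtensionClosed T U) (hUD : ∀ d : T, D d → d ∈ U)
    (hU : IsAdditiveSubcategory U) :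
    IsExtensionClosed T' (essImageSet Q U) := by
  intro Tr hTr h1 h3
  obtain ⟨u₁, hu₁, ⟨e₁⟩⟩ := h1
  obtain ⟨u₃, hu₃, ⟨e₃⟩⟩ := h3
  haveI := isLocalization_mcl Q D.trW
  haveI := hasRightCalc D
  set g' : Q.obj u₃ ⟶ Q.obj (u₁⟦(1 : ℤ)⟧) :=
    e₃.inv ≫ Tr.mor₃ ≫ e₁.hom⟦(1 : ℤ)⟧' ≫ (Q.commShiftIso (1 : ℤ)).inv.app u₁ with hg'
  obtain ⟨ψ, hψ⟩ := Localization.exists_rightFraction Q (mcl D.trW) g'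
  obtain ⟨Y, a, b, hT⟩ := distinguished_cocone_triangle₂ ψ.f
  have hw : ψ.X' ∈ U := (U_mcl_iff D hUe hUD ψ.hs).2 hu₃
  have hY : Y ∈ U := hUe _ hT hu₁ hw
  have hQT := Q.map_distinguished _ hT
  haveI : IsIso (Q.map ψ.s) := mcl_isInvertedBy (Localization.inverts Q D.trW) _ ψ.hs
  have h0 : Q.map ψ.s ≫ g' = Q.map ψ.f := by
    rw [hψ]; exact ψ.map_s_comp_map Q _
  have comm : (Q.mapTriangle.obj (Triangle.mk a b ψ.f)).mor₃ ≫ (e₁.inv)⟦(1 : ℤ)⟧' =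
      (Q.map ψ.s ≫ e₃.inv) ≫ Tr.mor₃ := by
    change (Q.map ψ.f ≫ (Q.commShiftIso (1 : ℤ)).hom.app u₁) ≫ (e₁.inv)⟦(1 : ℤ)⟧' = _
    rw [← h0, hg']
    simp only [Functor.comp_obj, Category.assoc, Iso.inv_hom_id_app, Category.comp_id,
      Category.id_comp, ← Functor.map_comp, Iso.hom_inv_id, CategoryTheory.Functor.map_id]
  obtain ⟨b₂, hb₁, hb₂⟩ := complete_distinguished_triangle_morphism₂ _ _ hQT hTr
    e₁.inv (Q.map ψ.s ≫ e₃.inv) comm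
  let φm : Q.mapTriangle.obj (Triangle.mk a b ψ.f) ⟶ Tr :=
    Triangle.homMk _ _ e₁.inv b₂ (Q.map ψ.s ≫ e₃.inv) hb₁ hb₂ comm
  haveI : IsIso φm.hom₂ := isIso₂_of_isIso₁₃ φm hQT hTr (by exact (inferInstance : IsIso e₁.inv))
    (by exact (inferInstance : IsIso (Q.map ψ.s ≫ e₃.inv)))
  exact ⟨Y, hY, ⟨(asIso φm.hom₂).symm⟩⟩

lemma preimage_props {X : Set T'} (hX : IsAdditiveSubcategory X)
    (hXe : IsExtensionClosed T' X) :
    IsAdditiveSubcategory (preimageSet Q X) ∧ IsExtensionClosed T (preimageSet Q X) ∧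
      (∀ d : T, D d → d ∈ preimageSet Q X) := by
  refine ⟨⟨?_, ?_, ?_, ?_⟩, ?_, ?_⟩
  · intro t ht
    exact ⟨0, hX.1 0 (isZero_zero T'), ⟨(Q.map_isZero ht).iso (isZero_zero T')⟩⟩
  · rintro t t' ⟨x, hx, ⟨e⟩⟩ ⟨e'⟩
    exact ⟨x, hx, ⟨(Q.mapIso e').symm ≪≫ e⟩⟩
  · rintro t t' ⟨x, hx, ⟨e⟩⟩ ⟨y, hy, ⟨e'⟩⟩
    exact ⟨x ⊞ y, hX.2.2.1 x y hx hy, ⟨QmapBiprod Q t t' ≪≫ biprod.mapIso e e'⟩⟩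
  · rintro t t' ⟨x, hx, ⟨e⟩⟩
    have hmem : (Q.obj t ⊞ Q.obj t') ∈ X :=
      hX.2.1 x _ hx ⟨e.symm ≪≫ QmapBiprod Q t t'⟩
    obtain ⟨h1, h2⟩ := hX.2.2.2 (Q.obj t) (Q.obj t') hmem
    exact ⟨⟨Q.obj t, h1, ⟨Iso.refl _⟩⟩, ⟨Q.obj t', h2, ⟨Iso.refl _⟩⟩⟩
  · rintro Tr hTr ⟨x₁, hx₁, ⟨e₁⟩⟩ ⟨x₃, hx₃, ⟨e₃⟩⟩
    have h1 : (Q.mapTriangle.obj Tr).obj₁ ∈ X := hX.2.1 x₁ _ hx₁ ⟨e₁.symm⟩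
    have h3 : (Q.mapTriangle.obj Tr).obj₃ ∈ X := hX.2.1 x₃ _ hx₃ ⟨e₃.symm⟩
    have h2 := hXe _ (Q.map_distinguished _ hTr) h1 h3
    exact ⟨Q.obj Tr.obj₂, h2, ⟨Iso.refl _⟩⟩
  · intro d hd
    exact ⟨0, hX.1 0 (isZero_zero T'), ⟨(isZero_Q_of_D D Q hd).iso (isZero_zero T')⟩⟩

end Main

end VerdierBijAux

theorem verdier_quotient_bijection_extensionClosed_subcategories
    {T : Type u₁} [Category.{v₁} T] [Preadditive T] [HasZeroObject T]
    [HasBinaryBiproducts T] [HasShift T ℤ]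
    [∀ n : ℤ, (shiftFunctor T n).Additive] [Pretriangulated T]
    {T' : Type u₂} [Category.{v₂} T'] [Preadditive T'] [HasZeroObject T']
    [HasBinaryBiproducts T'] [HasShift T' ℤ]
    [∀ n : ℤ, (shiftFunctor T' n).Additive] [Pretriangulated T']
    -- D is a thick subcategory of T
    (D : ObjectProperty T) [D.IsTriangulated] [D.IsClosedUnderIsomorphisms]
    (hD : ∀ X Y : T, D (X ⊞ Y) → D X ∧ D Y)
    -- Q is the Verdier quotient functor T → T/D
    (Q : T ⥤ T') [Q.CommShift ℤ] [Q.IsTriangulated] [Q.IsLocalization D.trW] :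
    -- the two maps are well defined
    (∀ U : Set T, IsAdditiveSubcategory U → IsExtensionClosed T U →
      (∀ d : T, D d → d ∈ U) →
      IsAdditiveSubcategory (essImageSet Q U) ∧ IsExtensionClosed T' (essImageSet Q U)) ∧
    (∀ X : Set T', IsAdditiveSubcategory X → IsExtensionClosed T' X →
      IsAdditiveSubcategory (preimageSet Q X) ∧ IsExtensionClosed T (preimageSet Q X) ∧
        (∀ d : T, D d → d ∈ preimageSet Q X)) ∧
    -- the two maps are mutually inverse
    (∀ U : Set T, IsAdditiveSubcategory U → IsExtensionClosed T U →
      (∀ d : T, D d → d ∈ U) → preimageSet Q (essImageSet Q U) = U) ∧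
    (∀ X : Set T', IsAdditiveSubcategory X → IsExtensionClosed T' X →
      essImageSet Q (preimageSet Q X) = X) ∧
    -- the two maps preserve inclusions
    (∀ U U' : Set T, U ⊆ U' → essImageSet Q U ⊆ essImageSet Q U') ∧
    (∀ X X' : Set T', X ⊆ X' → preimageSet Q X ⊆ preimageSet Q X') := by
  refine ⟨?_, ?_, ?_, ?_, ?_, ?_⟩
  · intro U hU hUe hUD
    exact ⟨VerdierBijAux.essImage_additive D Q hD hU hUe hUD,
      VerdierBijAux.essImage_ext D Q hUe hUD hU⟩
  · intro X hX hXe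
    exact VerdierBijAux.preimage_props D Q hX hXe
  · intro U hU hUe hUD
    apply Set.Subset.antisymm
    · rintro c ⟨x, ⟨u, hu, ⟨e'⟩⟩, ⟨e⟩⟩
      exact VerdierBijAux.mem_of_Qiso D Q hD hUe hUD (e ≪≫ e') hu
    · intro c hc
      exact ⟨Q.obj c, ⟨c, hc, ⟨Iso.refl _⟩⟩, ⟨Iso.refl _⟩⟩
  · intro X hX hXe
    apply Set.Subset.antisymm
    · rintro z ⟨t, ⟨x, hx, ⟨e'⟩⟩, ⟨e⟩⟩
      exact hX.2.1 x z hx ⟨e'.symm ≪≫ e.symm⟩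
    · intro x hx
      haveI : Q.EssSurj := Localization.essSurj Q D.trW
      exact ⟨Q.objPreimage x, ⟨x, hx, ⟨Q.objObjPreimageIso x⟩⟩, ⟨(Q.objObjPreimageIso x).symm⟩⟩
  · rintro U U' hUU' z ⟨u, hu, ⟨e⟩⟩
    exact ⟨u, hUU' hu, ⟨e⟩⟩
  · rintro X X' hXX' t ⟨x, hx, ⟨e⟩⟩
    exact ⟨x, hXX' hx, ⟨e⟩⟩
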